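/- Let A be the adjacency matrix of a connected undirected graph on N vertices, fix τ₂ > 0, and let x, y : ℝ → ℝ^N be differentiable at a point τ₁ > 0, with 0 < x_i(τ), 0 < y_i(τ) and x_i(τ) + y_i(τ) < 1 for all i, for τ in a neighborhood of τ₁, and suppose that for every such τ the coexistence fixed point equation Σ_j A_{ij} x_j(τ) = x_i(τ)/(τ(1 − x_i(τ) − y_i(τ))) holds for all i. If x_j'(τ₁) > 0 for all j, then for every i one has (1 − y_i(τ₁))·x_i'(τ₁) + x_i(τ₁)·y_i'(τ₁) > 0; in particular the derivative of τ ↦ x_i(τ)/(1 − y_i(τ)) at τ₁ is strictly positive for every i, i.e., x_i/(1 − y_i) strictly increases in the effective infection rate τ₁ of Virus 1. -/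

import Mathlib

open Matrix Finset

/-- Spectral radius of a real matrix: supremum of absolute values of its complex eigenvalues. -/
noncomputable def specRad {N : ℕ} (M : Matrix (Fin N) (Fin N) ℝ) : ℝ :=
  sSup ((fun z => ‖z‖) '' spectrum ℂ (M.map Complex.ofReal))

/-- `A` is the adjacency matrix of a connected undirected graph:
symmetric, 0/1 entries, zero diagonal, and irreducible (connectivity). -/
def IsConnectedAdjMatrix {N : ℕ} (A : Matrix (Fin N) (Fin N) ℝ) : Prop :=
  A.IsSymm ∧ (∀ i j, A i j = 0 ∨ A i j = 1) ∧ (∀ i, A i i = 0) ∧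
    (∀ i j, i ≠ j → ∃ k : ℕ, 0 < (A ^ k) i j)

/-- `x` satisfies the single-virus SIS fixed point equations for `(A, τ)`. -/
def IsSISFixedPoint {N : ℕ} (A : Matrix (Fin N) (Fin N) ℝ) (τ : ℝ)
    (x : Fin N → ℝ) : Prop :=
  (∀ i, 0 < x i ∧ x i < 1) ∧ (∀ i, ∑ j, A i j * x j = x i / (τ * (1 - x i)))

/-- Let `A` be the adjacency matrix of a connected undirected graph on `N`
vertices, fix `τ₂ > 0`, and let `x, y : ℝ → ℝ^N` be differentiable at a point `τ₁ > 0`, with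
`0 < x_i(τ)`, `0 < y_i(τ)` and `x_i(τ) + y_i(τ) < 1` for all `i`, for `τ` in a neighborhood of
`τ₁`, and suppose that for every such `τ` the coexistence fixed point equation
`Σ_j A_{ij} x_j(τ) = x_i(τ)/(τ(1 − x_i(τ) − y_i(τ)))` holds for all `i`. If `x_j'(τ₁) > 0`
for all `j`, then for every `i` one has
`(1 − y_i(τ₁))·x_i'(τ₁) + x_i(τ₁)·y_i'(τ₁) > 0`; in particular the derivative of
`τ ↦ x_i(τ)/(1 − y_i(τ))` at `τ₁` is strictly positive for every `i`. -/
theorem gi_increasing_in_tau1 {N : ℕ}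
    (A : Matrix (Fin N) (Fin N) ℝ) (hA : IsConnectedAdjMatrix A)
    (τ₁ τ₂ : ℝ) (hτ₁ : 0 < τ₁) (hτ₂ : 0 < τ₂)
    (x y : ℝ → Fin N → ℝ)
    (hdx : ∀ i, DifferentiableAt ℝ (fun τ => x τ i) τ₁)
    (hdy : ∀ i, DifferentiableAt ℝ (fun τ => y τ i) τ₁)
    (hnbhd : ∀ᶠ τ in nhds τ₁,
      (∀ i, 0 < x τ i ∧ 0 < y τ i ∧ x τ i + y τ i < 1) ∧
      (∀ i, ∑ j, A i j * x τ j = x τ i / (τ * (1 - x τ i - y τ i))))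
    (hx' : ∀ j, 0 < deriv (fun τ => x τ j) τ₁) :
    ∀ i, 0 < (1 - y τ₁ i) * deriv (fun τ => x τ i) τ₁ +
        x τ₁ i * deriv (fun τ => y τ i) τ₁ ∧
      0 < deriv (fun τ => x τ i / (1 - y τ i)) τ₁ := by
  intro i
  obtain ⟨hpos, heq⟩ := hnbhd.self_of_nhds
  obtain ⟨hx0, hy0, hxy⟩ := hpos i
  set a := x τ₁ i with ha
  set b := y τ₁ i with hb
  have hs : 0 < 1 - a - b := by linarith
  have hb1 : 0 < 1 - b := by linarith
  set a' := deriv (fun τ => x τ i) τ₁ with ha'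
  set b' := deriv (fun τ => y τ i) τ₁ with hb'
  have hxd : HasDerivAt (fun τ => x τ i) a' τ₁ := (hdx i).hasDerivAt
  have hyd : HasDerivAt (fun τ => y τ i) b' τ₁ := (hdy i).hasDerivAt
  have hAnn : ∀ j k, 0 ≤ A j k := by
    intro j k; rcases hA.2.1 j k with h | h <;> rw [h] <;> norm_num
  -- the row i of A has a positive entry
  have hrow : ∃ j, 0 < A i j := by
    by_contra h
    push_neg at h
    have hz : ∀ j, A i j = 0 := fun j => le_antisymm (h j) (hAnn i j)
    have h0 : (0 : ℝ) = a / (τ₁ * (1 - a - b)) := by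
      have := heq i; simpa [hz] using this
    have : 0 < a / (τ₁ * (1 - a - b)) := div_pos hx0 (by positivity)
    linarith [h0 ▸ this]
  obtain ⟨j₀, hj₀⟩ := hrow
  -- positivity of the derivative of the sum
  have hSpos : 0 < ∑ j, A i j * deriv (fun τ => x τ j) τ₁ := by
    refine Finset.sum_pos' (fun j _ => ?_) ⟨j₀, Finset.mem_univ j₀, ?_⟩
    · exact mul_nonneg (hAnn i j) (le_of_lt (hx' j))
    · exact mul_pos hj₀ (hx' j₀)
  set S := ∑ j, A i j * deriv (fun τ => x τ j) τ₁ with hS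
  -- derivative of the LHS of the fixed point equation
  have hF : HasDerivAt (fun τ => ∑ j, A i j * x τ j) S τ₁ :=
    HasDerivAt.fun_sum (fun j _ => ((hdx j).hasDerivAt.const_mul (A i j)))
  -- derivative of the RHS
  have hden : HasDerivAt (fun τ => τ * (1 - x τ i - y τ i))
      (1 * (1 - a - b) + τ₁ * (0 - a' - b')) τ₁ :=
    (hasDerivAt_id τ₁).mul (((hasDerivAt_const _ (1 : ℝ)).sub hxd).sub hyd)
  have hdenne : τ₁ * (1 - a - b) ≠ 0 := by positivity
  have hG : HasDerivAt (fun τ => x τ i / (τ * (1 - x τ i - y τ i)))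
      ((a' * (τ₁ * (1 - a - b)) - a * (1 * (1 - a - b) + τ₁ * (0 - a' - b'))) /
        (τ₁ * (1 - a - b)) ^ 2) τ₁ := hxd.div hden hdenne
  -- the two functions agree near τ₁, so derivatives agree
  have hEq : (fun τ => ∑ j, A i j * x τ j) =ᶠ[nhds τ₁]
      (fun τ => x τ i / (τ * (1 - x τ i - y τ i))) :=
    hnbhd.mono (fun τ h => h.2 i)
  have hde : S = (a' * (τ₁ * (1 - a - b)) - a * (1 * (1 - a - b) + τ₁ * (0 - a' - b'))) /
      (τ₁ * (1 - a - b)) ^ 2 := by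
    have := hEq.deriv_eq
    rw [hF.deriv, hG.deriv] at this
    exact this
  have hne2 : ((τ₁ * (1 - a - b)) ^ 2 : ℝ) ≠ 0 := pow_ne_zero 2 hdenne
  rw [eq_div_iff hne2] at hde
  have key : τ₁ * ((1 - b) * a' + a * b') =
      S * (τ₁ * (1 - a - b)) ^ 2 + a * (1 - a - b) := by
    linear_combination -hde
  have hτX : 0 < τ₁ * ((1 - b) * a' + a * b') := by
    rw [key]
    have h1 : 0 < S * (τ₁ * (1 - a - b)) ^ 2 :=
      mul_pos hSpos (by positivity)
    nlinarith [mul_pos hx0 hs]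
  have hmain : 0 < (1 - b) * a' + a * b' := by
    nlinarith
  refine ⟨hmain, ?_⟩
  have hg : HasDerivAt (fun τ => x τ i / (1 - y τ i))
      ((a' * (1 - b) - a * (0 - b')) / (1 - b) ^ 2) τ₁ :=
    hxd.div ((hasDerivAt_const _ (1 : ℝ)).sub hyd) (ne_of_gt hb1)
  rw [hg.deriv]
  have : a' * (1 - b) - a * (0 - b') = (1 - b) * a' + a * b' := by ring
  rw [this]
  exact div_pos hmain (pow_pos hb1 2)
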